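/- Let A be a commutative ring, f ∈ A, and A_f the localization of A away from f. Let B be an A_f-algebra which is finite as an A_f-module. Then there exists an A-subalgebra C of B (where A acts on B via A → A_f → B) such that C is finite as an A-module, the image of f in C becomes invertible in B, and the induced map from the localization C_f of C away from the image of f to B is an isomorphism of A-algebras. -/

import Mathlib

/-- Let `A` be a commutative ring, `f ∈ A`, and `B` an algebra over the localization
`A_f = Localization.Away f` which is finite as an `A_f`-module.  Then there is an
`A`-subalgebra `C ⊆ B` which is finite as an `A`-module, such that the image of `f`
is invertible in `B` and the induced map `C_f → B` is an isomorphism (i.e. `B` is the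
localization of `C` away from the image of `f`). -/
theorem exists_finite_model_of_finite_over_localization
    {A : Type*} [CommRing A] (f : A)
    {B : Type*} [CommRing B] [Algebra (Localization.Away f) B]
    [Module.Finite (Localization.Away f) B]
    [Algebra A B] [IsScalarTower A (Localization.Away f) B] :
    ∃ C : Subalgebra A B, Module.Finite A C ∧ IsUnit (algebraMap A B f) ∧
      IsLocalization.Away (⟨algebraMap A B f, C.algebraMap_mem f⟩ : C) B := by
  set Af := Localization.Away f
  have huf : IsUnit (algebraMap A B f) := by
    rw [IsScalarTower.algebraMap_apply A Af B]
    exact (IsLocalization.Away.algebraMap_isUnit (S := Af) f).map _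
  -- generators of `B` as an `Af`-module
  obtain ⟨s, hs⟩ : ∃ s : Finset B, Submodule.span Af (s : Set B) = ⊤ :=
    Module.finite_def.mp ‹Module.Finite Af B› |>.imp fun _ h => h
  -- clear denominators: for each generator `x` find a power of `f` with `f^n • x`
  -- integral over `A`
  have hint : ∀ x : B, IsIntegral Af x := fun x => IsIntegral.of_finite Af x
  choose m hm using fun x : B =>
    (hint x).exists_multiple_integral_of_isLocalization (M := Submonoid.powers f) x
  -- the finite model
  set T : Set B := (fun x : B => ((m x : A) • x)) '' (s : Set B) with hT
  set C : Subalgebra A B := Algebra.adjoin A T with hC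
  have hTfin : T.Finite := s.finite_toSet.image _
  have hfinC : Module.Finite A C := by
    exact Module.Finite.iff_fg (N := Subalgebra.toSubmodule C) |>.mpr
      (fg_adjoin_of_finite hTfin (by rintro _ ⟨x, hx, rfl⟩; exact hm x))
  -- the key claim: every element of `B` becomes an element of `C` after
  -- multiplying by a power of `f`
  have hfC : ∀ (n : ℕ) {c : B}, c ∈ C → (algebraMap A B f) ^ n * c ∈ C := by
    intro n c hc
    exact C.mul_mem (C.pow_mem (C.algebraMap_mem f) n) hc
  have claim : ∀ b : B, ∃ n : ℕ, (algebraMap A B f) ^ n * b ∈ C := by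
    have hmod : ∀ b ∈ Submodule.span Af (s : Set B),
        ∃ n : ℕ, (algebraMap A B f) ^ n * b ∈ C := by
      intro b hb
      refine Submodule.span_induction ?_ ?_ ?_ ?_ hb
      · -- generators
        intro x hx
        obtain ⟨j, hj⟩ := (m x).2
        refine ⟨j, ?_⟩
        have : (algebraMap A B f) ^ j * x = (m x : A) • x := by
          rw [Algebra.smul_def, ← hj, map_pow]
        rw [this]
        exact Algebra.subset_adjoin ⟨x, hx, rfl⟩
      · exact ⟨0, by simpa using C.zero_mem⟩
      · rintro x y - - ⟨n₁, h₁⟩ ⟨n₂, h₂⟩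
        refine ⟨n₁ + n₂, ?_⟩
        rw [mul_add]
        refine C.add_mem ?_ ?_
        · rw [add_comm n₁ n₂, pow_add, mul_assoc]
          exact hfC n₂ h₁
        · rw [pow_add, mul_assoc]
          exact hfC n₁ h₂
      · rintro a x - ⟨n, hn⟩
        obtain ⟨⟨r, d⟩, hr⟩ := IsLocalization.surj (Submonoid.powers f) a
        obtain ⟨k, hk⟩ := d.2
        refine ⟨k + n, ?_⟩
        have key : (algebraMap A B f) ^ k * (a • x) = algebraMap A B r * x := by
          rw [Algebra.smul_def]
          rw [← mul_assoc]
          congr 1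
          have : (algebraMap A B f) ^ k = algebraMap Af B (algebraMap A Af (d : A)) := by
            rw [← hk, map_pow, map_pow, ← IsScalarTower.algebraMap_apply]
          rw [this, ← map_mul, mul_comm, hr, ← IsScalarTower.algebraMap_apply]
        rw [add_comm k n, pow_add, mul_assoc, key, mul_left_comm]
        exact C.mul_mem (C.algebraMap_mem r) hn
    intro b
    exact hmod b (hs ▸ Submodule.mem_top)
  refine ⟨C, hfinC, huf, ?_⟩
  set g : C := ⟨algebraMap A B f, C.algebraMap_mem f⟩
  have hg : ∀ n : ℕ, (algebraMap C B) (g ^ n) = (algebraMap A B f) ^ n := by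
    intro n; rfl
  constructor
  constructor
  · rintro ⟨y, n, rfl⟩
    rw [hg]
    exact huf.pow n
  · intro z
    obtain ⟨n, hn⟩ := claim z
    refine ⟨⟨⟨_, hn⟩, ⟨g ^ n, n, rfl⟩⟩, ?_⟩
    simp only [hg]
    rw [mul_comm]
    rfl
  · intro x y h
    refine ⟨1, ?_⟩
    have : (x : B) = (y : B) := h
    ext
    simpa using this
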